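/- Let f : (0,∞) → ℝ be three times continuously differentiable with f''(x) > 0 for all x > 0. Then the Bregman divergence b_f(p, q) = f(p) − f(q) − (p − q)·f'(q) is jointly convex on {(p, q) ∈ ℝ² : p > 0, q > 0} if and only if the function x ↦ 1/f''(x) is concave on (0,∞). -/

import Mathlib

open Set Filter Topology

private lemma nonneg_of_monotoneOn_hasDerivAt {g : ℝ → ℝ} {s : Set ℝ} (hs : IsOpen s)
    {x d : ℝ} (hx : x ∈ s) (hm : MonotoneOn g s) (hd : HasDerivAt g d x) : 0 ≤ d := by
  have h1 : Filter.Tendsto (slope g x) (𝓝[>] x) (𝓝 d) :=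
    (hasDerivAt_iff_tendsto_slope.1 hd).mono_left
      (nhdsWithin_mono x fun y hy => (ne_of_gt hy : y ≠ x))
  refine ge_of_tendsto h1 ?_
  filter_upwards [self_mem_nhdsWithin,
    eventually_nhdsWithin_of_eventually_nhds (hs.eventually_mem hx)] with y hy hys
  rw [slope_def_field]
  exact div_nonneg (sub_nonneg.2 (hm hx hys (le_of_lt hy))) (sub_nonneg.2 (le_of_lt hy))

variable {f : ℝ → ℝ}

private lemma D1 (hf : ContDiffOn ℝ 3 f (Set.Ioi 0)) {x : ℝ} (hx : x ∈ Set.Ioi (0:ℝ)) :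
    HasDerivAt f (deriv f x) x :=
  ((hf.differentiableOn (by norm_num)).differentiableAt (isOpen_Ioi.mem_nhds hx)).hasDerivAt

private lemma CD2 (hf : ContDiffOn ℝ 3 f (Set.Ioi 0)) :
    ContDiffOn ℝ 2 (deriv f) (Set.Ioi 0) :=
  hf.deriv_of_isOpen isOpen_Ioi (by norm_num)

private lemma D2 (hf : ContDiffOn ℝ 3 f (Set.Ioi 0)) {x : ℝ} (hx : x ∈ Set.Ioi (0:ℝ)) :
    HasDerivAt (deriv f) (deriv (deriv f) x) x :=
  (((CD2 hf).differentiableOn (by norm_num)).differentiableAt (isOpen_Ioi.mem_nhds hx)).hasDerivAt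

private lemma D3 (hf : ContDiffOn ℝ 3 f (Set.Ioi 0)) {x : ℝ} (hx : x ∈ Set.Ioi (0:ℝ)) :
    HasDerivAt (deriv (deriv f)) (deriv (deriv (deriv f)) x) x :=
  ((((CD2 hf).deriv_of_isOpen (m := 1) isOpen_Ioi (by norm_num)).differentiableOn
    (by norm_num)).differentiableAt (isOpen_Ioi.mem_nhds hx)).hasDerivAt

private lemma lineD4 (hf : ContDiffOn ℝ 3 f (Set.Ioi 0)) {p q u w t : ℝ}
    (hp : 0 < p + t*u) (hq : 0 < q + t*w) :
    HasDerivAt (fun s => f (p+s*u) - f (q+s*w) - ((p+s*u) - (q+s*w)) * deriv f (q+s*w))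
      (u * deriv f (p+t*u) - u * deriv f (q+t*w)
        - ((p+t*u)-(q+t*w)) * (w * deriv (deriv f) (q+t*w))) t ∧
    HasDerivAt (fun s => u * deriv f (p+s*u) - u * deriv f (q+s*w)
        - ((p+s*u)-(q+s*w)) * (w * deriv (deriv f) (q+s*w)))
      (u^2 * deriv (deriv f) (p+t*u) - 2*u*w* deriv (deriv f) (q+t*w)
        + w^2 * (deriv (deriv f) (q+t*w)
          - ((p+t*u)-(q+t*w)) * deriv (deriv (deriv f)) (q+t*w))) t := by
  have hP : HasDerivAt (fun s : ℝ => p + s*u) u t := by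
    simpa using ((hasDerivAt_id t).mul_const u).const_add p
  have hQ : HasDerivAt (fun s : ℝ => q + s*w) w t := by
    simpa using ((hasDerivAt_id t).mul_const w).const_add q
  have hpI : (p + t*u) ∈ Set.Ioi (0:ℝ) := hp
  have hqI : (q + t*w) ∈ Set.Ioi (0:ℝ) := hq
  have hfP : HasDerivAt (fun s => f (p+s*u)) (deriv f (p+t*u) * u) t := (D1 hf hpI).comp t hP
  have hfQ : HasDerivAt (fun s => f (q+s*w)) (deriv f (q+t*w) * w) t := (D1 hf hqI).comp t hQ
  have hf1P : HasDerivAt (fun s => deriv f (p+s*u)) (deriv (deriv f) (p+t*u) * u) t :=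
    by have := (D2 hf hpI).comp t hP; exact this
  have hf1Q : HasDerivAt (fun s => deriv f (q+s*w)) (deriv (deriv f) (q+t*w) * w) t :=
    by have := (D2 hf hqI).comp t hQ; exact this
  have hf2Q : HasDerivAt (fun s => deriv (deriv f) (q+s*w))
      (deriv (deriv (deriv f)) (q+t*w) * w) t := by have := (D3 hf hqI).comp t hQ; exact this
  constructor
  · have h := (hfP.sub hfQ).sub ((hP.sub hQ).mul hf1Q)
    refine h.congr_deriv ?_
    simp only [Pi.sub_apply]
    ring
  · have h := ((hf1P.const_mul u).sub (hf1Q.const_mul u)).sub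
      ((hP.sub hQ).mul (hf2Q.const_mul w))
    refine h.congr_deriv ?_
    simp only [Pi.sub_apply]
    ring

private lemma quadrant_convex : Convex ℝ {x : ℝ × ℝ | 0 < x.1 ∧ 0 < x.2} := by
  intro x hx y hy α β hα hβ hαβ
  refine ⟨?_, ?_⟩
  · simpa using (convex_Ioi (0:ℝ)) hx.1 hy.1 hα hβ hαβ
  · simpa using (convex_Ioi (0:ℝ)) hx.2 hy.2 hα hβ hαβ

private lemma isOpen_lineset (p u q w : ℝ) : IsOpen {t : ℝ | 0 < p + t*u ∧ 0 < q + t*w} := by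
  have h1 : IsOpen {t : ℝ | 0 < p + t*u} :=
    isOpen_lt continuous_const (continuous_const.add (continuous_id.mul continuous_const))
  have h2 : IsOpen {t : ℝ | 0 < q + t*w} :=
    isOpen_lt continuous_const (continuous_const.add (continuous_id.mul continuous_const))
  exact h1.inter h2

private lemma line_set_convex (p q u w : ℝ) :
    Convex ℝ {t : ℝ | 0 < p + t*u ∧ 0 < q + t*w} := by
  intro a ha b hb α β hα hβ hαβ
  simp only [smul_eq_mul, Set.mem_setOf_eq] at *
  constructor
  · have h1 := (convex_Ioi (0:ℝ)) ha.1 hb.1 hα hβ hαβ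
    simp only [smul_eq_mul, Set.mem_Ioi] at h1
    have e : α*(p+a*u)+β*(p+b*u) = p + (α*a+β*b)*u := by linear_combination p * hαβ
    linarith [h1, e.ge, e.le]
  · have h1 := (convex_Ioi (0:ℝ)) ha.2 hb.2 hα hβ hαβ
    simp only [smul_eq_mul, Set.mem_Ioi] at h1
    have e : α*(q+a*w)+β*(q+b*w) = q + (α*a+β*b)*w := by linear_combination q * hαβ
    linarith [h1, e.ge, e.le]

set_option maxHeartbeats 1000000 in
private lemma partB (hf : ContDiffOn ℝ 3 f (Set.Ioi 0))
    (hf'' : ∀ x ∈ Set.Ioi (0 : ℝ), 0 < deriv (deriv f) x) :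
    ConvexOn ℝ {x : ℝ × ℝ | 0 < x.1 ∧ 0 < x.2}
        (fun x => f x.1 - f x.2 - (x.1 - x.2) * deriv f x.2) ↔
    ∀ p ∈ Set.Ioi (0:ℝ), ∀ q ∈ Set.Ioi (0:ℝ),
      (deriv (deriv f) q)^2 ≤ deriv (deriv f) p *
        (deriv (deriv f) q - (p - q) * deriv (deriv (deriv f)) q) := by
  constructor
  · intro hb p hp q hq
    set u : ℝ := deriv (deriv f) q with hu
    set w : ℝ := deriv (deriv f) p with hw
    set I : Set ℝ := {t : ℝ | 0 < p + t*u ∧ 0 < q + t*w} with hI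
    have hIopen : IsOpen I := isOpen_lineset p u q w
    have hI0 : (0:ℝ) ∈ I := ⟨by simpa using hp, by simpa using hq⟩
    -- φ is convex on I
    have hφconv : ConvexOn ℝ I
        (fun s => f (p+s*u) - f (q+s*w) - ((p+s*u) - (q+s*w)) * deriv f (q+s*w)) := by
      refine ⟨line_set_convex p q u w, fun a ha b hb' α β hα hβ hαβ => ?_⟩
      have hmem1 : ((p+a*u, q+a*w) : ℝ × ℝ) ∈ {x : ℝ × ℝ | 0 < x.1 ∧ 0 < x.2} := ha
      have hmem2 : ((p+b*u, q+b*w) : ℝ × ℝ) ∈ {x : ℝ × ℝ | 0 < x.1 ∧ 0 < x.2} := hb'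
      have h2 := hb.2 hmem1 hmem2 hα hβ hαβ
      have hx : α • ((p+a*u, q+a*w) : ℝ × ℝ) + β • ((p+b*u, q+b*w) : ℝ × ℝ)
          = ((p+(α•a+β•b)*u, q+(α•a+β•b)*w) : ℝ × ℝ) := by
        apply Prod.ext <;> simp [smul_eq_mul] <;>
          [linear_combination p * hαβ; linear_combination q * hαβ]
      rw [hx] at h2
      simpa [smul_eq_mul] using h2
    have hmono : MonotoneOn (deriv
        (fun s => f (p+s*u) - f (q+s*w) - ((p+s*u) - (q+s*w)) * deriv f (q+s*w))) I :=
      hφconv.monotoneOn_deriv (fun t ht => ((lineD4 hf ht.1 ht.2).1).differentiableAt)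
    have hmono1 : MonotoneOn (fun t => u * deriv f (p+t*u) - u * deriv f (q+t*w)
        - ((p+t*u)-(q+t*w)) * (w * deriv (deriv f) (q+t*w))) I := by
      intro s hs t ht hst
      have e1 := ((lineD4 hf hs.1 hs.2).1).deriv
      have e2 := ((lineD4 hf ht.1 ht.2).1).deriv
      simp only []
      rw [← e1, ← e2]
      exact hmono hs ht hst
    have h0 := nonneg_of_monotoneOn_hasDerivAt hIopen hI0 hmono1 ((lineD4 hf hI0.1 hI0.2).2)
    have h0' : 0 ≤ u^2 * deriv (deriv f) p - 2*u*w* deriv (deriv f) q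
        + w^2 * (deriv (deriv f) q - (p-q) * deriv (deriv (deriv f)) q) := by
      simpa using h0
    nlinarith [h0', hf'' p hp, hf'' q hq]
  · intro hK
    refine ⟨quadrant_convex, fun x hx y hy α β hα hβ hαβ => ?_⟩
    set p : ℝ := x.1
    set q : ℝ := x.2
    set u : ℝ := y.1 - x.1 with hu
    set w : ℝ := y.2 - x.2 with hw
    set I : Set ℝ := {t : ℝ | 0 < p + t*u ∧ 0 < q + t*w} with hI
    have hIopen : IsOpen I := isOpen_lineset p u q w
    have hφconv : ConvexOn ℝ I
        (fun s => f (p+s*u) - f (q+s*w) - ((p+s*u) - (q+s*w)) * deriv f (q+s*w)) := by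
      refine convexOn_of_hasDerivWithinAt2_nonneg (line_set_convex p q u w)
        (f' := fun t => u * deriv f (p+t*u) - u * deriv f (q+t*w)
          - ((p+t*u)-(q+t*w)) * (w * deriv (deriv f) (q+t*w)))
        (f'' := fun t => u^2 * deriv (deriv f) (p+t*u) - 2*u*w* deriv (deriv f) (q+t*w)
          + w^2 * (deriv (deriv f) (q+t*w)
            - ((p+t*u)-(q+t*w)) * deriv (deriv (deriv f)) (q+t*w)))
        ?_ ?_ ?_ ?_
      · exact fun t ht => ((lineD4 hf ht.1 ht.2).1).differentiableAt.continuousAt.continuousWithinAt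
      · rw [hIopen.interior_eq]
        exact fun t ht => ((lineD4 hf ht.1 ht.2).1).hasDerivWithinAt
      · rw [hIopen.interior_eq]
        exact fun t ht => ((lineD4 hf ht.1 ht.2).2).hasDerivWithinAt
      · rw [hIopen.interior_eq]
        intro t ht
        have ha := hf'' _ (Set.mem_Ioi.2 ht.1)
        have hb := hf'' _ (Set.mem_Ioi.2 ht.2)
        have hKt := hK _ (Set.mem_Ioi.2 ht.1) _ (Set.mem_Ioi.2 ht.2)
        set A := deriv (deriv f) (p+t*u)
        set B := deriv (deriv f) (q+t*w)
        set C := deriv (deriv f) (q+t*w) - ((p+t*u)-(q+t*w)) * deriv (deriv (deriv f)) (q+t*w)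
          with hC
        have hKt' : B^2 ≤ A * C := hKt
        show 0 ≤ u^2 * A - 2*u*w*B + w^2 * C
        nlinarith [sq_nonneg (u*A - w*B), mul_nonneg (sq_nonneg w) (sub_nonneg.2 hKt'), ha, hb]
    have hI0 : (0:ℝ) ∈ I := ⟨by simpa using hx.1, by simpa using hx.2⟩
    have hI1 : (1:ℝ) ∈ I := by
      constructor
      · show (0:ℝ) < x.1 + 1*(y.1 - x.1)
        linarith [hy.1]
      · show (0:ℝ) < x.2 + 1*(y.2 - x.2)
        linarith [hy.2]
    have h2 := hφconv.2 hI0 hI1 hα hβ hαβ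
    have e0 : α • (0:ℝ) + β • (1:ℝ) = β := by simp
    rw [e0] at h2
    have hfst : (α • x + β • y).1 = p + β*(y.1 - x.1) := by
      simp [smul_eq_mul]
      linear_combination x.1 * hαβ
    have hsnd : (α • x + β • y).2 = q + β*(y.2 - x.2) := by
      simp [smul_eq_mul]
      linear_combination x.2 * hαβ
    simp only [hfst, hsnd]
    simpa [smul_eq_mul, hu, hw, p, q] using h2

private lemma tangent_iff {a b e s : ℝ} (ha : 0 < a) (hb : 0 < b) :
    1/a ≤ 1/b + (-e/b^2)*s ↔ b^2 ≤ a*(b - s*e) := by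
  have hb2 : (0:ℝ) < b^2 := by positivity
  have h2 : 1/b + (-e/b^2)*s = (b - s*e)/b^2 := by field_simp; ring
  rw [h2, div_le_div_iff₀ ha hb2, one_mul, mul_comm]

private lemma partA (hf : ContDiffOn ℝ 3 f (Set.Ioi 0))
    (hf'' : ∀ x ∈ Set.Ioi (0 : ℝ), 0 < deriv (deriv f) x) :
    ConcaveOn ℝ (Set.Ioi 0) (fun x => 1 / deriv (deriv f) x) ↔
    ∀ p ∈ Set.Ioi (0:ℝ), ∀ q ∈ Set.Ioi (0:ℝ),
      (deriv (deriv f) q)^2 ≤ deriv (deriv f) p *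
        (deriv (deriv f) q - (p - q) * deriv (deriv (deriv f)) q) := by
  set g : ℝ → ℝ := fun x => 1 / deriv (deriv f) x with hgdef
  have hg : ∀ x ∈ Set.Ioi (0:ℝ), HasDerivAt g
      (-(deriv (deriv (deriv f)) x) / (deriv (deriv f) x)^2) x := by
    intro x hx
    have h := (hasDerivAt_const x (1:ℝ)).div (D3 hf hx) (ne_of_gt (hf'' x hx))
    refine h.congr_deriv ?_
    ring
  -- tangent line inequality
  have htan : ∀ (hc : ConcaveOn ℝ (Set.Ioi 0) g), ∀ p ∈ Set.Ioi (0:ℝ), ∀ q ∈ Set.Ioi (0:ℝ),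
      g p ≤ g q + (-(deriv (deriv (deriv f)) q) / (deriv (deriv f) q)^2) * (p - q) := by
    intro hc p hp q hq
    rcases lt_trichotomy p q with h | h | h
    · have h1 := hc.le_slope_of_hasDerivAt hp hq h (hg q hq)
      rw [slope_def_field] at h1
      have hpq : 0 < q - p := by linarith
      rw [le_div_iff₀ hpq] at h1
      nlinarith [h1]
    · subst h; simp
    · have h1 := hc.slope_le_of_hasDerivAt hq hp h (hg q hq)
      rw [slope_def_field] at h1
      have hpq : 0 < p - q := by linarith
      rw [div_le_iff₀ hpq] at h1
      nlinarith [h1]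
  constructor
  · intro hc p hp q hq
    rw [← tangent_iff (hf'' p hp) (hf'' q hq)]
    have := htan hc p hp q hq
    simpa [hgdef] using this
  · intro hK
    -- tangent inequality holds
    have htan' : ∀ p ∈ Set.Ioi (0:ℝ), ∀ q ∈ Set.Ioi (0:ℝ),
        g p ≤ g q + (-(deriv (deriv (deriv f)) q) / (deriv (deriv f) q)^2) * (p - q) := by
      intro p hp q hq
      have := (tangent_iff (hf'' p hp) (hf'' q hq)).2 (hK p hp q hq)
      simpa [hgdef] using this
    have hanti : AntitoneOn (deriv g) (interior (Set.Ioi (0:ℝ))) := by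
      rw [interior_Ioi]
      intro x hx y hy hxy
      rw [(hg x hx).deriv, (hg y hy).deriv]
      rcases eq_or_lt_of_le hxy with rfl | hxy'
      · exact le_refl _
      · nlinarith [htan' x hx y hy, htan' y hy x hx, sub_pos.2 hxy']
    exact hanti.concaveOn_of_deriv (convex_Ioi 0)
      (fun x hx => (hg x hx).differentiableAt.continuousAt.continuousWithinAt)
      (by rw [interior_Ioi]; exact fun x hx => (hg x hx).differentiableAt.differentiableWithinAt)

/-- For `f` three times continuously differentiable on `(0,∞)` with
`f'' > 0` there, the Bregman divergence `(p,q) ↦ f p - f q - (p - q) * f' q` is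
jointly convex on the open positive quadrant iff `x ↦ 1 / f'' x` is concave on `(0,∞)`. -/
theorem statement4 (f : ℝ → ℝ) (hf : ContDiffOn ℝ 3 f (Set.Ioi 0))
    (hf'' : ∀ x ∈ Set.Ioi (0 : ℝ), 0 < deriv (deriv f) x) :
    ConvexOn ℝ {x : ℝ × ℝ | 0 < x.1 ∧ 0 < x.2}
        (fun x => f x.1 - f x.2 - (x.1 - x.2) * deriv f x.2) ↔
      ConcaveOn ℝ (Set.Ioi 0) (fun x => 1 / deriv (deriv f) x) := by
  exact (partB hf hf'').trans (partA hf hf'').symm
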